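/- Let (Û_{n,·})_{n∈ℕ} be random elements of C[0,1] on a probability space, let U_{n,t} ∈ ℝ and a_{n,t} > 0 (for n ∈ ℕ, t ∈ [0,1]) be deterministic constants, let B be a random element of C[0,1], and let (λ_n) be a positive bounded sequence. Assume (i) sup_{t∈[0,1]} |λ_n^{−1}(Û_{n,t} − U_{n,t})/a_{n,t} − B_t| →(P) 0 as n → ∞, (ii) sup_{|s−t|≤δ_n} |a_{n,s}/a_{n,t} − 1| = o(λ_n), and (iii) sup_{|s−t|≤δ_n} |(U_{n,s} − U_{n,t})/a_{n,t}| = o(λ_n). Then the linearly interpolated estimator Û*_{n,t} := ⟨Û_{n,·}⟩_{n,t} satisfies sup_{t∈[0,1]} |λ_n^{−1}(Û*_{n,t} − U_{n,t})/a_{n,t} − B_t| →(P) 0. -/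

import Mathlib

open MeasureTheory Filter Topology Set
open scoped Classical

/-- Piecewise linear interpolation of `z` on the grid `t 1 < t 2 < … < t jn`. -/
noncomputable def linInterp (jn : ℕ) (t : ℕ → ℝ) (z : ℝ → ℝ) (x : ℝ) : ℝ :=
  if x ≤ t 1 then z (t 1)
  else if h : ∃ j, 2 ≤ j ∧ j ≤ jn ∧ t (j - 1) < x ∧ x ≤ t j then
    ((t (Nat.find h) - x) * z (t (Nat.find h - 1))
        + (x - t (Nat.find h - 1)) * z (t (Nat.find h)))
      / (t (Nat.find h) - t (Nat.find h - 1))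
  else z (t jn)

private lemma grid_mono (jn : ℕ) (t : ℕ → ℝ)
    (htmono : ∀ j, 1 ≤ j → j < jn → t j < t (j + 1)) :
    ∀ i j, 1 ≤ i → i ≤ j → j ≤ jn → t i ≤ t j := by
  intro i j h1 hij
  induction j, hij using Nat.le_induction with
  | base => intro _; exact le_rfl
  | succ k hik ih =>
    intro hk
    exact le_trans (ih (by omega)) (le_of_lt (htmono k (by omega) (by omega)))

private lemma exists_rat_near_Icc (s : ℝ) (hs : s ∈ Set.Icc (0:ℝ) 1) {r : ℝ} (hr : 0 < r) :
    ∃ q : ℚ, (q:ℝ) ∈ Set.Icc (0:ℝ) 1 ∧ |(q:ℝ) - s| < r := by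
  rcases lt_or_eq_of_le hs.2 with h | h
  · obtain ⟨q, hq1, hq2⟩ := exists_rat_btwn (show s < min 1 (s + r) from lt_min h (by linarith))
    refine ⟨q, ⟨hs.1.trans hq1.le, (hq2.trans_le (min_le_left _ _)).le⟩, ?_⟩
    rw [abs_of_nonneg (by linarith)]
    have := hq2.trans_le (min_le_right _ _)
    linarith
  · subst h
    obtain ⟨q, hq1, hq2⟩ := exists_rat_btwn (show max 0 (1 - r) < (1:ℝ) from max_lt one_pos (by linarith))
    refine ⟨q, ⟨(le_max_left _ _).trans hq1.le, hq2.le⟩, ?_⟩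
    rw [abs_of_nonpos (by linarith)]
    have := (le_max_right 0 (1 - r)).trans_lt hq1
    linarith

private lemma linInterp_convex (jn : ℕ) (t : ℕ → ℝ) (δ : ℝ)
    (hjn : 1 ≤ jn) (ht0 : t 0 = 0) (htend : t (jn + 1) = 1)
    (htnonneg : 0 ≤ t 1) (htle1 : t jn ≤ 1)
    (htmono : ∀ j, 1 ≤ j → j < jn → t j < t (j + 1))
    (hδ : ∀ j, 1 ≤ j → j ≤ jn + 1 → t j - t (j - 1) ≤ δ)
    (s : ℝ) (hs : s ∈ Set.Icc (0:ℝ) 1) :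
    ∃ α u₁ u₂, 0 ≤ α ∧ α ≤ 1 ∧ u₁ ∈ Set.Icc (0:ℝ) 1 ∧ u₂ ∈ Set.Icc (0:ℝ) 1 ∧
      |u₁ - s| ≤ δ ∧ |u₂ - s| ≤ δ ∧
      ∀ z : ℝ → ℝ, linInterp jn t z s = α * z u₁ + (1 - α) * z u₂ := by
  have hmono := grid_mono jn t htmono
  have ht1jn : t 1 ≤ t jn := hmono 1 jn le_rfl hjn le_rfl
  have ht1mem : t 1 ∈ Set.Icc (0:ℝ) 1 := ⟨htnonneg, ht1jn.trans htle1⟩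
  have htjnmem : t jn ∈ Set.Icc (0:ℝ) 1 := ⟨htnonneg.trans ht1jn, htle1⟩
  have hδ1 : t 1 ≤ δ := by have := hδ 1 le_rfl (by omega); simpa [ht0] using this
  by_cases h1 : s ≤ t 1
  · refine ⟨1, t 1, t 1, by norm_num, by norm_num, ht1mem, ht1mem, ?_, ?_, ?_⟩
    · rw [abs_of_nonneg (by linarith)]; linarith [hs.1]
    · rw [abs_of_nonneg (by linarith)]; linarith [hs.1]
    · intro z; rw [linInterp, if_pos h1]; ring
  · by_cases h2 : ∃ j, 2 ≤ j ∧ j ≤ jn ∧ t (j - 1) < s ∧ s ≤ t j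
    · obtain ⟨hj2, hjle, hlt, hle⟩ := Nat.find_spec h2
      set j := Nat.find h2 with hjdef
      have hden : 0 < t j - t (j - 1) := by linarith
      have hδj : t j - t (j - 1) ≤ δ := hδ j (by omega) (by omega)
      have hu₁mem : t (j - 1) ∈ Set.Icc (0:ℝ) 1 := by
        constructor
        · exact htnonneg.trans (hmono 1 (j - 1) le_rfl (by omega) (by omega))
        · exact (hmono (j - 1) jn (by omega) (by omega) le_rfl).trans htle1
      have hu₂mem : t j ∈ Set.Icc (0:ℝ) 1 := by
        constructor
        · exact htnonneg.trans (hmono 1 j le_rfl (by omega) (by omega))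
        · exact (hmono j jn (by omega) hjle le_rfl).trans htle1
      refine ⟨(t j - s) / (t j - t (j - 1)), t (j - 1), t j,
        div_nonneg (by linarith) hden.le, (div_le_one hden).mpr (by linarith),
        hu₁mem, hu₂mem, ?_, ?_, ?_⟩
      · rw [abs_of_nonpos (by linarith)]; linarith
      · rw [abs_of_nonneg (by linarith)]; linarith
      · intro z
        rw [linInterp, if_neg h1, dif_pos h2]
        rw [← hjdef]
        field_simp
        ring
    · have hlt : t jn < s := by
        by_contra hc
        push_neg at hc
        have hex : ∃ j, s ≤ t j := ⟨jn, hc⟩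
        set j0 := Nat.find hex with hj0def
        have hspec : s ≤ t j0 := Nat.find_spec hex
        have hj0le : j0 ≤ jn := Nat.find_le hc
        have hj0ge : 2 ≤ j0 := by
          by_contra hcon
          push_neg at hcon
          interval_cases j0
          · rw [ht0] at hspec; linarith [lt_of_not_ge h1, htnonneg]
          · exact h1 hspec
        have hmin : ¬ s ≤ t (j0 - 1) := Nat.find_min hex (by omega)
        exact h2 ⟨j0, hj0ge, hj0le, lt_of_not_ge hmin, hspec⟩
      have hδend : t (jn + 1) - t jn ≤ δ := by
        have := hδ (jn + 1) (by omega) le_rfl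
        simpa using this
      refine ⟨1, t jn, t jn, by norm_num, by norm_num, htjnmem, htjnmem, ?_, ?_, ?_⟩
      · rw [abs_of_nonpos (by linarith)]; rw [htend] at hδend; linarith [hs.2]
      · rw [abs_of_nonpos (by linarith)]; rw [htend] at hδend; linarith [hs.2]
      · intro z; rw [linInterp, if_neg h1, dif_neg h2]; ring

set_option maxHeartbeats 2000000 in
/-- the linearly interpolated estimator of the location function
inherits the uniform asymptotic behavior of the original estimator. -/
theorem interpolated_location_estimator
    {Ω : Type*} [MeasurableSpace Ω] (P : Measure Ω) [IsProbabilityMeasure P]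
    (jn : ℕ → ℕ) (t : ℕ → ℕ → ℝ) (δ : ℕ → ℝ)
    (hjn : ∀ n, 1 ≤ jn n)
    (ht0 : ∀ n, t n 0 = 0) (htend : ∀ n, t n (jn n + 1) = 1)
    (htnonneg : ∀ n, 0 ≤ t n 1) (htle1 : ∀ n, t n (jn n) ≤ 1)
    (htmono : ∀ n j, 1 ≤ j → j < jn n → t n j < t n (j + 1))
    (hδ : ∀ n, δ n = (Finset.Icc 1 (jn n + 1)).sup' ⟨1, Finset.mem_Icc.mpr (by omega)⟩
      (fun j => t n j - t n (j - 1)))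
    (hδ0 : Tendsto δ atTop (𝓝 0))
    (Uhat : ℕ → Ω → ℝ → ℝ) (U : ℕ → ℝ → ℝ) (a : ℕ → ℝ → ℝ) (B : Ω → ℝ → ℝ) (lam : ℕ → ℝ)
    (hmeas : ∀ n s, Measurable fun ω => Uhat n ω s)
    (hpaths : ∀ n ω, ContinuousOn (Uhat n ω) (Icc 0 1))
    (hapos : ∀ n, ∀ s ∈ Icc (0:ℝ) 1, 0 < a n s)
    (hB : ∀ ω, ContinuousOn (B ω) (Icc 0 1))
    (hlam_pos : ∀ n, 0 < lam n) (hlam_bdd : ∃ C, ∀ n, lam n ≤ C)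
    -- condition (E(λₙ)): uniform convergence in probability of the standardized errors
    (hE : ∀ ε > 0, Tendsto
      (fun n => P {ω | ∃ s ∈ Icc (0:ℝ) 1,
        ε < |(Uhat n ω s - U n s) / a n s / lam n - B ω s|})
      atTop (𝓝 0))
    -- smoothness: sup_{|s-u|≤δₙ} |a_{n,s}/a_{n,u} - 1| = o(λₙ)
    (hasmooth : ∀ ε > 0, ∀ᶠ n in atTop, ∀ s ∈ Icc (0:ℝ) 1, ∀ u ∈ Icc (0:ℝ) 1,
      |s - u| ≤ δ n → |a n s / a n u - 1| ≤ ε * lam n)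
    -- smoothness: sup_{|s-u|≤δₙ} |(U_{n,s} - U_{n,u})/a_{n,u}| = o(λₙ)
    (hUsmooth : ∀ ε > 0, ∀ᶠ n in atTop, ∀ s ∈ Icc (0:ℝ) 1, ∀ u ∈ Icc (0:ℝ) 1,
      |s - u| ≤ δ n → |(U n s - U n u) / a n u| ≤ ε * lam n) :
    ∀ ε > 0, Tendsto
      (fun n => P {ω | ∃ s ∈ Icc (0:ℝ) 1,
        ε < |(linInterp (jn n) (t n) (Uhat n ω) s - U n s) / a n s / lam n - B ω s|})
      atTop (𝓝 0) := by
  intro ε hε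
  obtain ⟨C0, hC0⟩ := hlam_bdd
  set C' : ℝ := max C0 1 with hC'def
  have hC'pos : (0:ℝ) < C' := lt_of_lt_of_le one_pos (le_max_right _ _)
  have hlamC : ∀ n, lam n ≤ C' := fun n => (hC0 n).trans (le_max_left _ _)
  set X : ℕ → Ω → ℝ → ℝ := fun n ω s => (Uhat n ω s - U n s) / a n s / lam n with hXdef
  have hXmeas : ∀ n s, Measurable fun ω => X n ω s := fun n s =>
    (((hmeas n s).sub measurable_const).div_const _).div_const _
  -- a subsequence along which the standardized errors converge a.s. uniformly
  have hseq : ∀ j : ℕ, ∃ nj : ℕ,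
      P {ω | ∃ s ∈ Icc (0:ℝ) 1, 1/((j:ℝ)+1) < |X nj ω s - B ω s|} ≤ (1/2 : ENNReal)^j := by
    intro j
    obtain ⟨N, hN⟩ := ENNReal.tendsto_atTop_zero.mp (hE _ (by positivity : (0:ℝ) < 1/((j:ℝ)+1)))
      ((1/2 : ENNReal)^j) (ENNReal.pow_pos (by norm_num) j)
    exact ⟨N, hN N le_rfl⟩
  choose nseq hnseq using hseq
  set D : ℕ → Set Ω := fun j =>
    {ω | ∃ s ∈ Icc (0:ℝ) 1, 1/((j:ℝ)+1) < |X (nseq j) ω s - B ω s|} with hDdef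
  set N : Set Ω := ⋂ J : ℕ, ⋃ j : ℕ, ⋃ (_ : J ≤ j), D j with hNdef
  have hNnull : P N = 0 := by
    have hb : ∀ J : ℕ, P N ≤ (1/2:ENNReal)^J * 2 := by
      intro J
      have h1 : N ⊆ ⋃ k : ℕ, D (J + k) := by
        intro ω hω
        have h := mem_iInter.mp hω J
        simp only [mem_iUnion] at h
        obtain ⟨j, hj, hωj⟩ := h
        exact mem_iUnion.mpr ⟨j - J, by rwa [Nat.add_sub_cancel' hj]⟩
      calc P N ≤ ∑' k : ℕ, P (D (J + k)) := (measure_mono h1).trans (measure_iUnion_le _)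
        _ ≤ ∑' k : ℕ, (1/2:ENNReal)^(J+k) := ENNReal.tsum_le_tsum fun k => hnseq (J+k)
        _ = (1/2:ENNReal)^J * ∑' k : ℕ, (1/2:ENNReal)^k := by
            simp_rw [pow_add]; rw [ENNReal.tsum_mul_left]
        _ = (1/2:ENNReal)^J * 2 := by
            rw [ENNReal.tsum_geometric]
            norm_num
    have htend : Tendsto (fun J : ℕ => (1/2:ENNReal)^J * 2) atTop (𝓝 0) := by
      have h := ENNReal.Tendsto.mul_const
        (ENNReal.tendsto_pow_atTop_nhds_zero_of_lt_one (by norm_num : (1/2:ENNReal) < 1))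
        (Or.inr (by norm_num : (2:ENNReal) ≠ ⊤))
      simpa using h
    exact le_antisymm (ge_of_tendsto' htend hb) (by simp)
  have hNconv : ∀ ω, ω ∉ N → ∀ s ∈ Icc (0:ℝ) 1,
      Tendsto (fun j => X (nseq j) ω s) atTop (𝓝 (B ω s)) := by
    intro ω hω s hs
    rw [hNdef, mem_iInter] at hω
    push_neg at hω
    obtain ⟨J, hJ⟩ := hω
    simp only [mem_iUnion, not_exists] at hJ
    rw [Metric.tendsto_atTop]
    intro r hr
    obtain ⟨M, hM⟩ := exists_nat_one_div_lt hr
    refine ⟨max J M, fun j hj => ?_⟩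
    have h1 : ω ∉ D j := hJ j (le_trans (le_max_left _ _) hj)
    rw [hDdef, mem_setOf_eq] at h1
    push_neg at h1
    have h2 := h1 s hs
    rw [Real.dist_eq]
    have h3 : 1/((j:ℝ)+1) ≤ 1/((M:ℝ)+1) := by
      apply one_div_le_one_div_of_le (by positivity)
      have : (M:ℝ) ≤ j := Nat.cast_le.mpr (le_trans (le_max_right _ _) hj)
      linarith
    calc |X (nseq j) ω s - B ω s| ≤ 1/((j:ℝ)+1) := h2
      _ < r := lt_of_le_of_lt h3 hM
  -- a measurable version of B at rational time points
  have hgex : ∀ q : ℚ, ∃ gq : Ω → ℝ, Measurable gq ∧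
      P {ω | (q:ℝ) ∈ Icc (0:ℝ) 1 ∧ B ω (q:ℝ) ≠ gq ω} = 0 := by
    intro q
    by_cases hq : (q:ℝ) ∈ Icc (0:ℝ) 1
    · obtain ⟨glim, hgm, hgt⟩ := measurable_limit_of_tendsto_metrizable_ae (μ := P)
        (f := fun j ω => X (nseq j) ω (q:ℝ)) (L := atTop)
        (fun j => (hXmeas _ _).aemeasurable)
        (by
          rw [ae_iff]
          refine measure_mono_null ?_ hNnull
          intro ω hω
          simp only [mem_setOf_eq] at hω
          by_contra hωN
          exact hω ⟨B ω q, hNconv ω hωN q hq⟩)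
      refine ⟨glim, hgm, ?_⟩
      have hsub : {ω | (q:ℝ) ∈ Icc (0:ℝ) 1 ∧ B ω (q:ℝ) ≠ glim ω} ⊆
          {ω | ¬ Tendsto (fun j => X (nseq j) ω (q:ℝ)) atTop (𝓝 (glim ω))} ∪ N := by
        intro ω hω
        by_contra hc
        simp only [mem_union, mem_setOf_eq, not_or, not_not] at hc
        exact hω.2 (tendsto_nhds_unique (hNconv ω hc.2 q hq) hc.1)
      exact measure_mono_null hsub (measure_union_null (ae_iff.mp hgt) hNnull)
    · exact ⟨fun _ => 0, measurable_const, by simp [hq]⟩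
  choose g hgmeas hgnull using hgex
  set N' : Set Ω := N ∪ ⋃ q : ℚ, {ω | (q:ℝ) ∈ Icc (0:ℝ) 1 ∧ B ω (q:ℝ) ≠ g q ω} with hN'def
  have hN'null : P N' = 0 := measure_union_null hNnull (measure_iUnion_null hgnull)
  have hBg : ∀ ω, ω ∉ N' → ∀ q : ℚ, (q:ℝ) ∈ Icc (0:ℝ) 1 → B ω (q:ℝ) = g q ω := by
    intro ω hω q hq
    by_contra hne
    exact hω (mem_union_right _ (mem_iUnion.mpr ⟨q, hq, hne⟩))
  -- measurable events controlling the modulus of continuity and the bound of B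
  set ε2 : ℝ := ε/4 with hε2def
  have hε2pos : 0 < ε2 := by positivity
  set G : ℕ → Set Ω := fun m =>
    {ω | ∀ q : ℚ, (q:ℝ) ∈ Icc (0:ℝ) 1 → (|g q ω| ≤ (m:ℝ) ∧
      ∀ q' : ℚ, (q':ℝ) ∈ Icc (0:ℝ) 1 → |(q:ℝ) - (q':ℝ)| ≤ 1/((m:ℝ)+1) →
        |g q ω - g q' ω| ≤ ε2)} with hGdef
  have hGmeas : ∀ m, MeasurableSet (G m) := by
    intro m
    have hrw : G m = ⋂ q : ℚ, ⋂ (_ : (q:ℝ) ∈ Icc (0:ℝ) 1),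
        ({ω | |g q ω| ≤ (m:ℝ)} ∩ ⋂ q' : ℚ, ⋂ (_ : (q':ℝ) ∈ Icc (0:ℝ) 1)
          (_ : |(q:ℝ) - (q':ℝ)| ≤ 1/((m:ℝ)+1)), {ω | |g q ω - g q' ω| ≤ ε2}) := by
      ext ω
      simp only [hGdef, mem_setOf_eq, mem_iInter, mem_inter_iff]
    rw [hrw]
    refine MeasurableSet.iInter fun q => MeasurableSet.iInter fun _ =>
      (measurableSet_le (hgmeas q).abs measurable_const).inter
        (MeasurableSet.iInter fun q' => MeasurableSet.iInter fun _ =>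
          MeasurableSet.iInter fun _ =>
            measurableSet_le ((hgmeas q).sub (hgmeas q')).abs measurable_const)
  have hGmono : Monotone G := by
    intro m m' hmm ω hω q hq
    obtain ⟨hb1, hb2⟩ := hω q hq
    refine ⟨hb1.trans (by exact_mod_cast hmm), fun q' hq' hd => hb2 q' hq' (hd.trans ?_)⟩
    apply one_div_le_one_div_of_le (by positivity)
    have : (m:ℝ) ≤ (m':ℝ) := by exact_mod_cast hmm
    linarith
  have hGcover : ∀ ω, ω ∉ N' → ∃ m : ℕ, ω ∈ G m := by
    intro ω hω
    obtain ⟨Mb, hMb⟩ := (isCompact_Icc (a := (0:ℝ)) (b := 1)).exists_bound_of_continuousOn (hB ω)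
    have hUC := (isCompact_Icc (a := (0:ℝ)) (b := 1)).uniformContinuousOn_of_continuous (hB ω)
    rw [Metric.uniformContinuousOn_iff] at hUC
    obtain ⟨d, hd, hUCd⟩ := hUC ε2 hε2pos
    obtain ⟨m1, hm1⟩ := exists_nat_gt Mb
    obtain ⟨m2, hm2⟩ := exists_nat_one_div_lt hd
    refine ⟨max m1 m2, fun q hq => ?_⟩
    constructor
    · rw [← hBg ω hω q hq]
      have h := hMb q hq
      rw [Real.norm_eq_abs] at h
      have : (m1:ℝ) ≤ (max m1 m2 : ℕ) := by exact_mod_cast le_max_left m1 m2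
      linarith
    · intro q' hq' hdq
      rw [← hBg ω hω q hq, ← hBg ω hω q' hq']
      have hlt : dist (q:ℝ) (q':ℝ) < d := by
        rw [Real.dist_eq]
        have hmle : (m2:ℝ) ≤ ((max m1 m2 : ℕ):ℝ) := by exact_mod_cast le_max_right m1 m2
        have h1 : 1/(((max m1 m2 : ℕ):ℝ)+1) ≤ 1/((m2:ℝ)+1) :=
          one_div_le_one_div_of_le (by positivity) (by linarith)
        calc |(q:ℝ) - (q':ℝ)| ≤ 1/(((max m1 m2 : ℕ):ℝ)+1) := hdq
          _ ≤ 1/((m2:ℝ)+1) := h1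
          _ < d := hm2
      have h := hUCd q hq q' hq' hlt
      rw [Real.dist_eq] at h
      linarith
  -- the complements of G m shrink to a null set
  have hGi177 : (⋂ m : ℕ, (G m)ᶜ) ⊆ N' := by
    intro ω hω
    by_contra hωN
    obtain ⟨m, hm⟩ := hGcover ω hωN
    exact (mem_iInter.mp hω m) hm
  have hGtend : Tendsto (fun m => P ((G m)ᶜ)) atTop (𝓝 0) := by
    have h := tendsto_measure_iInter_atTop (μ := P) (s := fun m => (G m)ᶜ)
      (fun m => (hGmeas m).compl.nullMeasurableSet)
      (fun m m' hmm => compl_subset_compl.mpr (hGmono hmm))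
      ⟨0, measure_ne_top P _⟩
    have h0 : P (⋂ m : ℕ, (G m)ᶜ) = 0 := measure_mono_null hGi177 hN'null
    rw [h0] at h
    exact h
  -- now fix the tolerance η
  rw [ENNReal.tendsto_atTop_zero]
  intro η hη
  have hη2 : (0:ENNReal) < η/2 := ENNReal.div_pos (ne_of_gt hη) (by norm_num)
  obtain ⟨m, hmG⟩ := ENNReal.tendsto_atTop_zero.mp hGtend (η/2) hη2
  have hmG' : P ((G m)ᶜ) ≤ η/2 := hmG m le_rfl
  -- pathwise bounds for B on good events
  have hP1 : ∀ ω, ω ∉ N' → ω ∈ G m → ∀ s ∈ Icc (0:ℝ) 1, |B ω s| ≤ (m:ℝ) := by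
    intro ω hω hGω s hs
    refine le_of_forall_pos_le_add fun θ hθ => ?_
    have hc := hB ω s hs
    rw [Metric.continuousWithinAt_iff] at hc
    obtain ⟨ρ, hρ, hcd⟩ := hc θ hθ
    obtain ⟨q, hq, hqs⟩ := exists_rat_near_Icc s hs hρ
    have h1 := hcd hq (by rw [Real.dist_eq]; exact hqs)
    rw [Real.dist_eq] at h1
    have h2 : |g q ω| ≤ (m:ℝ) := (hGω q hq).1
    rw [← hBg ω hω q hq] at h2
    have h3 := abs_sub_abs_le_abs_sub (B ω s) (B ω (q:ℝ))
    rw [abs_sub_comm] at h1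
    linarith
  have hP2 : ∀ ω, ω ∉ N' → ω ∈ G m → ∀ s ∈ Icc (0:ℝ) 1, ∀ u ∈ Icc (0:ℝ) 1,
      |s - u| ≤ 1/(2*((m:ℝ)+1)) → |B ω s - B ω u| ≤ ε2 := by
    intro ω hω hGω s hs u hu hsu
    refine le_of_forall_pos_le_add fun θ hθ => ?_
    have hcs := hB ω s hs
    have hcu := hB ω u hu
    rw [Metric.continuousWithinAt_iff] at hcs hcu
    obtain ⟨ρs, hρs, hcds⟩ := hcs (θ/2) (by linarith)
    obtain ⟨ρu, hρu, hcdu⟩ := hcu (θ/2) (by linarith)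
    have hquarter : (0:ℝ) < 1/(4*((m:ℝ)+1)) := by positivity
    obtain ⟨q, hq, hqs⟩ := exists_rat_near_Icc s hs (lt_min hρs hquarter)
    obtain ⟨q', hq', hq's⟩ := exists_rat_near_Icc u hu (lt_min hρu hquarter)
    have h1 := hcds hq (by rw [Real.dist_eq]; exact hqs.trans_le (min_le_left _ _))
    have h2 := hcdu hq' (by rw [Real.dist_eq]; exact hq's.trans_le (min_le_left _ _))
    rw [Real.dist_eq] at h1 h2
    have hqq' : |(q:ℝ) - (q':ℝ)| ≤ 1/((m:ℝ)+1) := by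
      have e1 : |(q:ℝ) - s| < 1/(4*((m:ℝ)+1)) := hqs.trans_le (min_le_right _ _)
      have e2 : |(q':ℝ) - u| < 1/(4*((m:ℝ)+1)) := hq's.trans_le (min_le_right _ _)
      have e3 : |(q:ℝ) - (q':ℝ)| ≤ |(q:ℝ) - s| + |s - u| + |u - (q':ℝ)| := by
        calc |(q:ℝ) - (q':ℝ)| = |((q:ℝ) - s) + ((s - u) + (u - (q':ℝ)))| := by ring_nf
          _ ≤ |(q:ℝ) - s| + |(s - u) + (u - (q':ℝ))| := abs_add_le _ _
          _ ≤ |(q:ℝ) - s| + (|s - u| + |u - (q':ℝ)|) := by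
              have := abs_add_le (s - u) (u - (q':ℝ)); linarith
          _ = |(q:ℝ) - s| + |s - u| + |u - (q':ℝ)| := by ring
      rw [abs_sub_comm] at e2
      have hm1 : (0:ℝ) < (m:ℝ)+1 := by positivity
      have : 1/(4*((m:ℝ)+1)) + 1/(2*((m:ℝ)+1)) + 1/(4*((m:ℝ)+1)) = 1/((m:ℝ)+1) := by
        field_simp
        ring
      linarith
    have h3 := (hGω q hq).2 q' hq' hqq'
    rw [← hBg ω hω q hq, ← hBg ω hω q' hq'] at h3
    have e4 : |B ω s - B ω u| ≤ |B ω (q:ℝ) - B ω s| + |B ω (q:ℝ) - B ω (q':ℝ)|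
        + |B ω (q':ℝ) - B ω u| := by
      have t1 := abs_add_le (B ω s - B ω (q:ℝ)) ((B ω (q:ℝ) - B ω (q':ℝ)) + (B ω (q':ℝ) - B ω u))
      have t2 := abs_add_le (B ω (q:ℝ) - B ω (q':ℝ)) (B ω (q':ℝ) - B ω u)
      have t3 : |B ω s - B ω (q:ℝ)| = |B ω (q:ℝ) - B ω s| := abs_sub_comm _ _
      have t4 : B ω s - B ω u = (B ω s - B ω (q:ℝ)) + ((B ω (q:ℝ) - B ω (q':ℝ)) + (B ω (q':ℝ) - B ω u)) := by ring
      rw [t4]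
      linarith
    linarith
  -- remaining tolerances
  set ε1 : ℝ := ε/8 with hε1def
  set ε3 : ℝ := min (1/C') (ε/(8*C'*((m:ℝ)+1))) with hε3def
  set ε4 : ℝ := ε/4 with hε4def
  have hε3pos : (0:ℝ) < ε3 := lt_min (by positivity) (by positivity)
  have hδsmall : ∀ᶠ n in atTop, δ n < 1/(2*((m:ℝ)+1)) :=
    hδ0.eventually_lt_const (by positivity)
  have hEev : ∀ᶠ n in atTop, P {ω | ∃ s ∈ Icc (0:ℝ) 1, ε1 < |X n ω s - B ω s|} ≤ η/2 := by
    obtain ⟨N0, hN0⟩ := ENNReal.tendsto_atTop_zero.mp (hE ε1 (by positivity)) (η/2) hη2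
    exact eventually_atTop.mpr ⟨N0, hN0⟩
  have hbig := ((hδsmall.and (hasmooth ε3 hε3pos)).and
    ((hUsmooth ε4 (by positivity)).and hEev))
  obtain ⟨N0, hN0⟩ := eventually_atTop.mp hbig
  refine ⟨N0, fun n hn => ?_⟩
  obtain ⟨⟨h_δ, h_a⟩, h_U, h_E⟩ := hN0 n hn
  -- the inclusion of the bad event
  have hincl : {ω | ∃ s ∈ Icc (0:ℝ) 1,
      ε < |(linInterp (jn n) (t n) (Uhat n ω) s - U n s) / a n s / lam n - B ω s|} ⊆
      {ω | ∃ s ∈ Icc (0:ℝ) 1, ε1 < |X n ω s - B ω s|} ∪ ((G m)ᶜ ∪ N') := by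
    intro ω hω
    by_contra hc
    simp only [mem_union, not_or, mem_compl_iff, not_not] at hc
    obtain ⟨hcE, hcG, hcN⟩ := hc
    obtain ⟨s, hs, hεs⟩ := hω
    have hδn : ∀ j, 1 ≤ j → j ≤ jn n + 1 → t n j - t n (j-1) ≤ δ n := by
      intro j hj1 hj2
      rw [hδ n]
      exact Finset.le_sup' (fun j => t n j - t n (j - 1)) (Finset.mem_Icc.mpr ⟨hj1, hj2⟩)
    obtain ⟨α, u₁, u₂, hα0, hα1, hu₁, hu₂, hd₁, hd₂, hform⟩ :=
      linInterp_convex (jn n) (t n) (δ n) (hjn n) (ht0 n) (htend n)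
        (htnonneg n) (htle1 n) (htmono n) hδn s hs
    have has : 0 < a n s := hapos n s hs
    have hlamn : 0 < lam n := hlam_pos n
    rw [mem_setOf_eq] at hcE
    push_neg at hcE
    -- per-gridpoint bound
    have hub : ∀ u ∈ Icc (0:ℝ) 1, |u - s| ≤ δ n →
        |(Uhat n ω u - U n s) / a n s / lam n - B ω s| ≤ ε := by
      intro u hu hus
      have hau : 0 < a n u := hapos n u hu
      have h1 : |(Uhat n ω u - U n u) / a n u / lam n - B ω u| ≤ ε1 := hcE u hu
      have hr : |a n u / a n s - 1| ≤ ε3 * lam n := h_a u hu s hs hus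
      have hUb : |(U n u - U n s) / a n s| ≤ ε4 * lam n := h_U u hu s hs hus
      have hBu : |B ω u| ≤ (m:ℝ) := hP1 ω hcN hcG u hu
      have hBus : |B ω u - B ω s| ≤ ε2 := hP2 ω hcN hcG u hu s hs (hus.trans h_δ.le)
      have hident : (Uhat n ω u - U n s) / a n s / lam n - B ω s =
          ((Uhat n ω u - U n u) / a n u / lam n - B ω u) * (a n u / a n s)
          + B ω u * (a n u / a n s - 1) + (B ω u - B ω s)
          + (U n u - U n s) / a n s / lam n := by
        field_simp
        ring
      rw [hident]
      have hratio_pos : (0:ℝ) < a n u / a n s := div_pos hau has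
      have hε3C : ε3 * C' ≤ 1 := by
        have h := min_le_left (1/C') (ε/(8*C'*((m:ℝ)+1)))
        calc ε3 * C' ≤ (1/C') * C' := mul_le_mul_of_nonneg_right h hC'pos.le
          _ = 1 := by field_simp
      have hratio_le : a n u / a n s ≤ 2 := by
        have h := (abs_le.mp hr).2
        have h2 : ε3 * lam n ≤ ε3 * C' := mul_le_mul_of_nonneg_left (hlamC n) hε3pos.le
        linarith
      have hT1 : |((Uhat n ω u - U n u) / a n u / lam n - B ω u) * (a n u / a n s)| ≤ ε1 * 2 := by
        rw [abs_mul, abs_of_pos hratio_pos]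
        apply mul_le_mul h1 hratio_le hratio_pos.le (by positivity)
      have hT2 : |B ω u * (a n u / a n s - 1)| ≤ ε/8 := by
        rw [abs_mul]
        have hstep : |B ω u| * |a n u / a n s - 1| ≤ (m:ℝ) * (ε3 * C') := by
          apply mul_le_mul hBu _ (abs_nonneg _) (Nat.cast_nonneg m)
          calc |a n u / a n s - 1| ≤ ε3 * lam n := hr
            _ ≤ ε3 * C' := mul_le_mul_of_nonneg_left (hlamC n) hε3pos.le
        have hkey : (m:ℝ) * (ε3 * C') ≤ ε/8 := by
          have h := min_le_right (1/C') (ε/(8*C'*((m:ℝ)+1)))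
          have hm0 : (0:ℝ) ≤ (m:ℝ) := Nat.cast_nonneg m
          have hC'ne : C' ≠ 0 := ne_of_gt hC'pos
          have hm1ne : ((m:ℝ)+1) ≠ 0 := by positivity
          calc (m:ℝ) * (ε3 * C') ≤ (m:ℝ) * ((ε/(8*C'*((m:ℝ)+1))) * C') := by
                apply mul_le_mul_of_nonneg_left (mul_le_mul_of_nonneg_right h hC'pos.le) hm0
            _ = ε * ((m:ℝ)/((m:ℝ)+1)) / 8 := by field_simp
            _ ≤ ε * 1 / 8 := by
                have : (m:ℝ)/((m:ℝ)+1) ≤ 1 := by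
                  rw [div_le_one (by positivity)]; linarith
                nlinarith
            _ = ε/8 := by ring
        linarith
      have hT4 : |(U n u - U n s) / a n s / lam n| ≤ ε4 := by
        rw [abs_div, abs_of_pos hlamn, div_le_iff₀ hlamn]
        exact hUb
      have habs : |((Uhat n ω u - U n u) / a n u / lam n - B ω u) * (a n u / a n s)
          + B ω u * (a n u / a n s - 1) + (B ω u - B ω s)
          + (U n u - U n s) / a n s / lam n| ≤
          |((Uhat n ω u - U n u) / a n u / lam n - B ω u) * (a n u / a n s)|
          + |B ω u * (a n u / a n s - 1)| + |B ω u - B ω s|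
          + |(U n u - U n s) / a n s / lam n| := by
        have t1 := abs_add_le (((Uhat n ω u - U n u) / a n u / lam n - B ω u) * (a n u / a n s)
          + B ω u * (a n u / a n s - 1) + (B ω u - B ω s)) ((U n u - U n s) / a n s / lam n)
        have t2 := abs_add_le (((Uhat n ω u - U n u) / a n u / lam n - B ω u) * (a n u / a n s)
          + B ω u * (a n u / a n s - 1)) (B ω u - B ω s)
        have t3 := abs_add_le (((Uhat n ω u - U n u) / a n u / lam n - B ω u) * (a n u / a n s))
          (B ω u * (a n u / a n s - 1))
        linarith
      have hε1val : ε1 * 2 = ε/4 := by rw [hε1def]; ring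
      calc |((Uhat n ω u - U n u) / a n u / lam n - B ω u) * (a n u / a n s)
          + B ω u * (a n u / a n s - 1) + (B ω u - B ω s)
          + (U n u - U n s) / a n s / lam n| ≤
          |((Uhat n ω u - U n u) / a n u / lam n - B ω u) * (a n u / a n s)|
          + |B ω u * (a n u / a n s - 1)| + |B ω u - B ω s|
          + |(U n u - U n s) / a n s / lam n| := habs
        _ ≤ ε1 * 2 + ε/8 + ε2 + ε4 := by
            have := hT1; have := hT2; have := hT4; linarith
        _ ≤ ε := by rw [hε1val, hε2def, hε4def]; linarith
    -- combine the two grid points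
    have hcomb : (linInterp (jn n) (t n) (Uhat n ω) s - U n s) / a n s / lam n - B ω s =
        α * ((Uhat n ω u₁ - U n s) / a n s / lam n - B ω s)
        + (1 - α) * ((Uhat n ω u₂ - U n s) / a n s / lam n - B ω s) := by
      rw [hform (Uhat n ω)]
      field_simp
      ring
    have hfinal : |(linInterp (jn n) (t n) (Uhat n ω) s - U n s) / a n s / lam n - B ω s| ≤ ε := by
      rw [hcomb]
      calc |α * ((Uhat n ω u₁ - U n s) / a n s / lam n - B ω s)
          + (1 - α) * ((Uhat n ω u₂ - U n s) / a n s / lam n - B ω s)| ≤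
          |α * ((Uhat n ω u₁ - U n s) / a n s / lam n - B ω s)|
          + |(1 - α) * ((Uhat n ω u₂ - U n s) / a n s / lam n - B ω s)| := abs_add_le _ _
        _ = α * |(Uhat n ω u₁ - U n s) / a n s / lam n - B ω s|
          + (1 - α) * |(Uhat n ω u₂ - U n s) / a n s / lam n - B ω s| := by
            have h1α : (0:ℝ) ≤ 1 - α := by linarith
            rw [abs_mul, abs_mul, abs_of_nonneg hα0, abs_of_nonneg h1α]
        _ ≤ α * ε + (1 - α) * ε := add_le_add
            (mul_le_mul_of_nonneg_left (hub u₁ hu₁ hd₁) hα0)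
            (mul_le_mul_of_nonneg_left (hub u₂ hu₂ hd₂) (by linarith))
        _ = ε := by ring
    exact absurd hεs (not_lt.mpr hfinal)
  -- conclude via subadditivity
  calc P {ω | ∃ s ∈ Icc (0:ℝ) 1,
      ε < |(linInterp (jn n) (t n) (Uhat n ω) s - U n s) / a n s / lam n - B ω s|} ≤
      P ({ω | ∃ s ∈ Icc (0:ℝ) 1, ε1 < |X n ω s - B ω s|} ∪ ((G m)ᶜ ∪ N')) :=
        measure_mono hincl
    _ ≤ P {ω | ∃ s ∈ Icc (0:ℝ) 1, ε1 < |X n ω s - B ω s|} + P ((G m)ᶜ ∪ N') :=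
        measure_union_le _ _
    _ ≤ P {ω | ∃ s ∈ Icc (0:ℝ) 1, ε1 < |X n ω s - B ω s|} + (P ((G m)ᶜ) + P N') := by
        gcongr
        exact measure_union_le _ _
    _ ≤ η/2 + (η/2 + 0) := by
        rw [hN'null]
        exact add_le_add h_E (add_le_add hmG' le_rfl)
    _ = η := by rw [add_zero, ENNReal.add_halves]
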